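/- Consider the single-qubit state injection channel: given ancilla state (u, v) with |u|² + |v|² = 1, the channel G(σ) = A₁σA₁† + A₂σA₂† with A₁ = diag(u,v), A₂ = diag(v e^{iπ/4}, u e^{−iπ/4}), and the target channel E(σ) = T σ T† with T = diag(e^{iπ/8}, e^{−iπ/8}). Then for any 2×2 matrix σ with ‖σ‖₁ ≤ 1, ‖E(σ) − G(σ)‖₁ ≤ 2‖T − √2·Ā‖ + 2‖Δ‖², where Ā = (A₁ + A₂)/2 and Δ = (A₁ − A₂)/2. -/

import Mathlib

open scoped Matrix.Norms.L2Operator ComplexOrder Kronecker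
open Matrix Complex

/-- The trace norm (sum of singular values) of a square complex matrix. -/
noncomputable def traceNorm {n : Type*} [Fintype n] [DecidableEq n] (A : Matrix n n ℂ) : ℝ :=
  (((Matrix.posSemidef_conjTranspose_mul_self A).1.eigenvectorUnitary : Matrix n n ℂ) *
    Matrix.diagonal ((fun x : ℝ => (x : ℂ)) ∘ (√·) ∘ (Matrix.posSemidef_conjTranspose_mul_self A).1.eigenvalues) *
    (star (Matrix.posSemidef_conjTranspose_mul_self A).1.eigenvectorUnitary : Matrix n n ℂ)).trace.re

namespace TNAux

variable {n : Type*} [Fintype n] [DecidableEq n]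

omit [DecidableEq n] in
lemma coord_le_norm (x : EuclideanSpace ℂ n) (i : n) : ‖x i‖ ≤ ‖x‖ := by
  rw [EuclideanSpace.norm_eq]
  calc ‖x i‖ = Real.sqrt (‖x i‖ ^ 2) := (Real.sqrt_sq (norm_nonneg _)).symm
    _ ≤ _ := Real.sqrt_le_sqrt <|
        Finset.single_le_sum (fun j _ => sq_nonneg ‖x j‖) (Finset.mem_univ i)

lemma opNorm_diagonal_le (w : n → ℂ) {c : ℝ} (hc : 0 ≤ c) (h : ∀ i, ‖w i‖ ≤ c) :
    ‖Matrix.diagonal w‖ ≤ c := by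
  rw [Matrix.l2_opNorm_def]
  refine ContinuousLinearMap.opNorm_le_bound _ hc fun x => ?_
  have hx : (Matrix.toEuclideanLin (Matrix.diagonal w) x : EuclideanSpace ℂ n)
      = (WithLp.equiv 2 (n → ℂ)).symm (fun i => w i * x i) := by
    rw [Matrix.toEuclideanLin_apply]
    congr 1
    funext i
    simp [Matrix.mulVec, dotProduct, Matrix.diagonal_apply, ite_mul,
      Finset.sum_ite_eq, Finset.mem_univ]
  show ‖(Matrix.toEuclideanLin (Matrix.diagonal w) x : EuclideanSpace ℂ n)‖ ≤ c * ‖x‖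
  rw [hx]
  rw [EuclideanSpace.norm_eq, EuclideanSpace.norm_eq]
  rw [← Real.sqrt_sq hc, ← Real.sqrt_mul (sq_nonneg c)]
  apply Real.sqrt_le_sqrt
  rw [Finset.mul_sum]
  apply Finset.sum_le_sum
  intro i _
  have h1 : ((WithLp.equiv 2 (n → ℂ)).symm (fun i => w i * x i) : EuclideanSpace ℂ n) i
      = w i * x i := rfl
  rw [h1, norm_mul, mul_pow]
  exact mul_le_mul_of_nonneg_right (pow_le_pow_left₀ (norm_nonneg _) (h i) 2) (sq_nonneg _)

lemma norm_unitary_le {U : Matrix n n ℂ} (hU : Uᴴ * U = 1) : ‖U‖ ≤ 1 := by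
  have h1 : ‖(1 : Matrix n n ℂ)‖ ≤ 1 := by
    rw [← Matrix.diagonal_one]
    exact opNorm_diagonal_le _ zero_le_one (fun i => by simp)
  have h2 := Matrix.l2_opNorm_conjTranspose_mul_self U
  rw [hU] at h2
  nlinarith [norm_nonneg U]

lemma traceNorm_eq_sum (M : Matrix n n ℂ) :
    traceNorm M
      = ∑ i, Real.sqrt ((Matrix.posSemidef_conjTranspose_mul_self M).1.eigenvalues i) := by
  unfold traceNorm
  rw [Matrix.trace_mul_cycle]
  rw [Matrix.UnitaryGroup.star_mul_self, Matrix.one_mul, Matrix.trace_diagonal]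
  simp

lemma traceNorm_nonneg (M : Matrix n n ℂ) : 0 ≤ traceNorm M := by
  rw [traceNorm_eq_sum]
  exact Finset.sum_nonneg fun i _ => Real.sqrt_nonneg _

lemma re_trace_mul_le (C M : Matrix n n ℂ) :
    (Matrix.trace (C * M)).re ≤ ‖C‖ * traceNorm M := by
  set hH := (Matrix.posSemidef_conjTranspose_mul_self M).1 with hhH
  set U : Matrix n n ℂ := (hH.eigenvectorUnitary : Matrix n n ℂ) with hUdef
  have hUU : Uᴴ * U = 1 := by
    rw [← Matrix.star_eq_conjTranspose]
    exact Matrix.UnitaryGroup.star_mul_self _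
  have hUUT : U * Uᴴ = 1 := by
    rw [← Matrix.star_eq_conjTranspose]
    exact Matrix.mem_unitaryGroup_iff.mp hH.eigenvectorUnitary.2
  set N : Matrix n n ℂ := M * U with hNdef
  have hNN : Nᴴ * N = Matrix.diagonal (RCLike.ofReal ∘ hH.eigenvalues) := by
    have hs := hH.conjStarAlgAut_star_eigenvectorUnitary
    rw [Unitary.conjStarAlgAut_apply, Unitary.coe_star, star_star] at hs
    rw [Matrix.star_eq_conjTranspose] at hs
    calc Nᴴ * N = Uᴴ * (Mᴴ * M) * U := by
          rw [hNdef, Matrix.conjTranspose_mul]; noncomm_ring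
      _ = _ := hs
  have colnorm : ∀ i,
      ‖((WithLp.equiv 2 (n → ℂ)).symm (fun k => N k i) : EuclideanSpace ℂ n)‖
        = Real.sqrt (hH.eigenvalues i) := by
    intro i
    rw [EuclideanSpace.norm_eq]
    congr 1
    have he : (Nᴴ * N) i i = (hH.eigenvalues i : ℂ) := by
      rw [hNN]; simp [Matrix.diagonal_apply_eq]
    have : ((Nᴴ * N) i i).re = hH.eigenvalues i := by rw [he]; simp
    rw [← this, Matrix.mul_apply, Complex.re_sum]
    apply Finset.sum_congr rfl
    intro k _
    have h1 : ((WithLp.equiv 2 (n → ℂ)).symm (fun k => N k i) : EuclideanSpace ℂ n) k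
        = N k i := rfl
    rw [h1, Matrix.conjTranspose_apply, Complex.star_def, mul_comm, Complex.mul_conj]
    simp [Complex.sq_norm]
  set C' := Uᴴ * C with hC'def
  have key : Matrix.trace (C' * N) = Matrix.trace (C * M) := by
    have h2 : C' * N = Uᴴ * (C * M * U) := by rw [hC'def, hNdef]; noncomm_ring
    rw [h2, Matrix.trace_mul_comm,
      show (C * M * U) * Uᴴ = C * M * (U * Uᴴ) from by rw [Matrix.mul_assoc],
      hUUT, Matrix.mul_one]
  have hC'norm : ‖C'‖ ≤ ‖C‖ := by
    calc ‖C'‖ ≤ ‖Uᴴ‖ * ‖C‖ := Matrix.l2_opNorm_mul _ _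
      _ ≤ 1 * ‖C‖ := by
          refine mul_le_mul_of_nonneg_right ?_ (norm_nonneg C)
          refine norm_unitary_le ?_
          rw [Matrix.conjTranspose_conjTranspose]
          exact hUUT
      _ = ‖C‖ := one_mul _
  have entry_bound : ∀ i, ((C' * N) i i).re ≤ ‖C'‖ * Real.sqrt (hH.eigenvalues i) := by
    intro i
    set y : EuclideanSpace ℂ n := (WithLp.equiv 2 (n → ℂ)).symm (fun k => N k i) with hy
    have h1 : (C' * N) i i
        = ((EuclideanSpace.equiv n ℂ).symm (C' *ᵥ y) : EuclideanSpace ℂ n) i := by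
      simp [Matrix.mul_apply, Matrix.mulVec, dotProduct]
      rfl
    calc ((C' * N) i i).re ≤ ‖(C' * N) i i‖ := Complex.re_le_norm _
      _ = ‖((EuclideanSpace.equiv n ℂ).symm (C' *ᵥ y) : EuclideanSpace ℂ n) i‖ := by rw [h1]
      _ ≤ ‖((EuclideanSpace.equiv n ℂ).symm (C' *ᵥ y) : EuclideanSpace ℂ n)‖ :=
          coord_le_norm _ _
      _ ≤ ‖C'‖ * ‖y‖ := Matrix.l2_opNorm_mulVec _ _
      _ = ‖C'‖ * Real.sqrt (hH.eigenvalues i) := by rw [hy, colnorm i]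
  calc (Matrix.trace (C * M)).re = (Matrix.trace (C' * N)).re := by rw [key]
    _ = ∑ i, ((C' * N) i i).re := by rw [Matrix.trace]; exact Complex.re_sum _ _
    _ ≤ ∑ i, ‖C'‖ * Real.sqrt (hH.eigenvalues i) :=
        Finset.sum_le_sum fun i _ => entry_bound i
    _ = ‖C'‖ * traceNorm M := by rw [traceNorm_eq_sum, Finset.mul_sum]
    _ ≤ ‖C‖ * traceNorm M := mul_le_mul_of_nonneg_right hC'norm (traceNorm_nonneg M)

end TNAux

namespace TNAux

variable {n : Type*} [Fintype n] [DecidableEq n]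

lemma diag_mul_conjT_aux (d : n → ℂ) (N : Matrix n n ℂ) :
    (Matrix.diagonal d * Nᴴ) * (Matrix.diagonal d * Nᴴ)ᴴ
      = Matrix.diagonal d * (Nᴴ * N) * Matrix.diagonal (star d) := by
  rw [Matrix.conjTranspose_mul, Matrix.conjTranspose_conjTranspose,
    Matrix.diagonal_conjTranspose]
  noncomm_ring

lemma exists_dual (M : Matrix n n ℂ) :
    ∃ C : Matrix n n ℂ, ‖C‖ ≤ 1 ∧ (Matrix.trace (C * M)).re = traceNorm M := by
  set hH := (Matrix.posSemidef_conjTranspose_mul_self M).1 with hhH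
  set U : Matrix n n ℂ := (hH.eigenvectorUnitary : Matrix n n ℂ) with hUdef
  have hUU : Uᴴ * U = 1 := by
    rw [← Matrix.star_eq_conjTranspose]; exact Matrix.UnitaryGroup.star_mul_self _
  have hUUT : U * Uᴴ = 1 := by
    rw [← Matrix.star_eq_conjTranspose]
    exact Matrix.mem_unitaryGroup_iff.mp hH.eigenvectorUnitary.2
  set N : Matrix n n ℂ := M * U with hNdef
  have hNN : Nᴴ * N = Matrix.diagonal (RCLike.ofReal ∘ hH.eigenvalues) := by
    have hs := hH.conjStarAlgAut_star_eigenvectorUnitary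
    rw [Unitary.conjStarAlgAut_apply, Unitary.coe_star, star_star] at hs
    rw [Matrix.star_eq_conjTranspose] at hs
    calc Nᴴ * N = Uᴴ * (Mᴴ * M) * U := by
          rw [hNdef, Matrix.conjTranspose_mul]; noncomm_ring
      _ = _ := hs
  have heig : ∀ i, 0 ≤ hH.eigenvalues i := fun i =>
    (Matrix.posSemidef_conjTranspose_mul_self M).eigenvalues_nonneg i
  set g : n → ℝ := fun i =>
    if hH.eigenvalues i = 0 then 0 else (Real.sqrt (hH.eigenvalues i))⁻¹ with hg
  set d : n → ℂ := fun i => (g i : ℂ) with hd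
  have hval : ∀ i, g i * hH.eigenvalues i = Real.sqrt (hH.eigenvalues i) := by
    intro i
    rw [hg]
    by_cases hz : hH.eigenvalues i = 0
    · simp [hz]
    · have hs2 : Real.sqrt (hH.eigenvalues i) * Real.sqrt (hH.eigenvalues i)
          = hH.eigenvalues i := Real.mul_self_sqrt (heig i)
      have hsp : 0 < Real.sqrt (hH.eigenvalues i) :=
        Real.sqrt_pos.mpr (lt_of_le_of_ne (heig i) (Ne.symm hz))
      simp only [hz, if_false]
      rw [← hs2]
      field_simp
      rw [Real.sqrt_sq hsp.le]
  refine ⟨U * (Matrix.diagonal d * Nᴴ), ?_, ?_⟩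
  · have hCC : (Matrix.diagonal d * Nᴴ) * (Matrix.diagonal d * Nᴴ)ᴴ
        = Matrix.diagonal (fun i => ((g i * (g i * hH.eigenvalues i) : ℝ) : ℂ)) := by
      rw [diag_mul_conjT_aux, hNN, Matrix.diagonal_mul_diagonal,
        Matrix.diagonal_mul_diagonal]
      have hfun : (fun i => d i * (RCLike.ofReal ∘ hH.eigenvalues) i * star d i)
          = fun i => ((g i * (g i * hH.eigenvalues i) : ℝ) : ℂ) := by
        funext i
        simp only [hd, Pi.star_apply, Function.comp_apply, RCLike.star_def, Complex.conj_ofReal]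
        rw [show (RCLike.ofReal (hH.eigenvalues i) : ℂ)
          = ((hH.eigenvalues i : ℝ) : ℂ) from rfl]
        push_cast
        ring
      rw [hfun]
    have hentry : ∀ i, ‖(((g i * (g i * hH.eigenvalues i) : ℝ) : ℂ))‖ ≤ 1 := by
      intro i
      rw [hval i]
      by_cases hz : hH.eigenvalues i = 0
      · simp [hg, hz]
      · have hsp : 0 < Real.sqrt (hH.eigenvalues i) :=
          Real.sqrt_pos.mpr (lt_of_le_of_ne (heig i) (Ne.symm hz))
        have : g i * Real.sqrt (hH.eigenvalues i) = 1 := by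
          rw [hg]; simp only [hz, if_false]; field_simp
        rw [this]; simp
    have h1 : ‖(Matrix.diagonal d * Nᴴ) * (Matrix.diagonal d * Nᴴ)ᴴ‖ ≤ 1 := by
      rw [hCC]; exact opNorm_diagonal_le _ zero_le_one hentry
    have h2 : ‖(Matrix.diagonal d * Nᴴ) * (Matrix.diagonal d * Nᴴ)ᴴ‖
        = ‖Matrix.diagonal d * Nᴴ‖ * ‖Matrix.diagonal d * Nᴴ‖ := by
      have := Matrix.l2_opNorm_conjTranspose_mul_self ((Matrix.diagonal d * Nᴴ)ᴴ)
      rwa [Matrix.conjTranspose_conjTranspose, Matrix.l2_opNorm_conjTranspose] at this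
    have hC₀ : ‖Matrix.diagonal d * Nᴴ‖ ≤ 1 := by
      nlinarith [norm_nonneg (Matrix.diagonal d * Nᴴ)]
    calc ‖U * (Matrix.diagonal d * Nᴴ)‖ ≤ ‖U‖ * ‖Matrix.diagonal d * Nᴴ‖ :=
          Matrix.l2_opNorm_mul _ _
      _ ≤ 1 * 1 := mul_le_mul (norm_unitary_le hUU) hC₀ (norm_nonneg _) zero_le_one
      _ = 1 := one_mul 1
  · have key : Matrix.trace (U * (Matrix.diagonal d * Nᴴ) * M)
        = Matrix.trace (Matrix.diagonal d * Nᴴ * N) := by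
      rw [Matrix.trace_mul_cycle, hNdef, Matrix.trace_mul_comm, Matrix.mul_assoc]
    have hdiag : Matrix.diagonal d * Nᴴ * N
        = Matrix.diagonal (fun i => d i * ((hH.eigenvalues i : ℝ) : ℂ)) := by
      rw [Matrix.mul_assoc, hNN, Matrix.diagonal_mul_diagonal]
      rfl
    rw [key, hdiag, Matrix.trace_diagonal, traceNorm_eq_sum, Complex.re_sum]
    apply Finset.sum_congr rfl
    intro i _
    rw [hd]
    rw [← Complex.ofReal_mul, Complex.ofReal_re, hval i]

end TNAux

namespace TNAux

variable {n : Type*} [Fintype n] [DecidableEq n]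

lemma sqrt_congr {A B : Matrix n n ℂ} (h : A = B) (hA : A.IsHermitian) (hB : B.IsHermitian) :
    hA.eigenvalues = hB.eigenvalues := by subst h; rfl

lemma traceNorm_neg (A : Matrix n n ℂ) : traceNorm (-A) = traceNorm A := by
  have h : (-A)ᴴ * (-A) = Aᴴ * A := by simp
  rw [traceNorm_eq_sum, traceNorm_eq_sum, sqrt_congr h (Matrix.posSemidef_conjTranspose_mul_self (-A)).1
    (Matrix.posSemidef_conjTranspose_mul_self A).1]

lemma traceNorm_add_le (A B : Matrix n n ℂ) :
    traceNorm (A + B) ≤ traceNorm A + traceNorm B := by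
  obtain ⟨C, hC1, hC2⟩ := exists_dual (A + B)
  rw [← hC2, Matrix.mul_add, Matrix.trace_add, Complex.add_re]
  have h1 := re_trace_mul_le C A
  have h2 := re_trace_mul_le C B
  nlinarith [traceNorm_nonneg A, traceNorm_nonneg B, norm_nonneg C]

lemma traceNorm_mul_le_left (X M : Matrix n n ℂ) :
    traceNorm (X * M) ≤ ‖X‖ * traceNorm M := by
  obtain ⟨C, hC1, hC2⟩ := exists_dual (X * M)
  rw [← hC2, ← Matrix.mul_assoc]
  calc (Matrix.trace ((C * X) * M)).re ≤ ‖C * X‖ * traceNorm M := re_trace_mul_le _ _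
    _ ≤ (‖C‖ * ‖X‖) * traceNorm M :=
        mul_le_mul_of_nonneg_right (Matrix.l2_opNorm_mul _ _) (traceNorm_nonneg M)
    _ ≤ ‖X‖ * traceNorm M :=
        mul_le_mul_of_nonneg_right (mul_le_of_le_one_left (norm_nonneg X) hC1)
          (traceNorm_nonneg M)

lemma traceNorm_mul_le_right (M X : Matrix n n ℂ) :
    traceNorm (M * X) ≤ traceNorm M * ‖X‖ := by
  obtain ⟨C, hC1, hC2⟩ := exists_dual (M * X)
  rw [← hC2, ← Matrix.mul_assoc, Matrix.trace_mul_cycle]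
  calc (Matrix.trace ((X * C) * M)).re ≤ ‖X * C‖ * traceNorm M := re_trace_mul_le _ _
    _ ≤ (‖X‖ * ‖C‖) * traceNorm M :=
        mul_le_mul_of_nonneg_right (Matrix.l2_opNorm_mul _ _) (traceNorm_nonneg M)
    _ ≤ traceNorm M * ‖X‖ := by
        rw [mul_comm (traceNorm M) ‖X‖]
        exact mul_le_mul_of_nonneg_right
          (by
            rw [mul_comm]
            exact mul_le_of_le_one_left (norm_nonneg X) hC1)
          (traceNorm_nonneg M)

end TNAux

theorem stmt_18 (u v : ℂ) (huv : ‖u‖ ^ 2 + ‖v‖ ^ 2 = 1)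
    (A₁ A₂ T Abar Δ : Matrix (Fin 2) (Fin 2) ℂ)
    (hA₁ : A₁ = Matrix.diagonal ![u, v])
    (hA₂ : A₂ = Matrix.diagonal
      ![v * Complex.exp (Complex.I * (Real.pi / 4)),
        u * Complex.exp (-(Complex.I * (Real.pi / 4)))])
    (hT : T = Matrix.diagonal
      ![Complex.exp (Complex.I * (Real.pi / 8)), Complex.exp (-(Complex.I * (Real.pi / 8)))])
    (hAbar : Abar = (1 / 2 : ℂ) • (A₁ + A₂))
    (hΔ : Δ = (1 / 2 : ℂ) • (A₁ - A₂))
    (σ : Matrix (Fin 2) (Fin 2) ℂ) (hσ : traceNorm σ ≤ 1) :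
    traceNorm (T * σ * Tᴴ - (A₁ * σ * A₁ᴴ + A₂ * σ * A₂ᴴ)) ≤
      2 * ‖T - (Real.sqrt 2 : ℂ) • Abar‖ + 2 * ‖Δ‖ ^ 2 := by
  set B : Matrix (Fin 2) (Fin 2) ℂ := (Real.sqrt 2 : ℂ) • Abar with hB
  have h1 : A₁ = Abar + Δ := by rw [hAbar, hΔ]; module
  have h2 : A₂ = Abar - Δ := by rw [hAbar, hΔ]; module
  have hs2 : (Real.sqrt 2 : ℂ) * (Real.sqrt 2 : ℂ) = 2 := by
    rw [← Complex.ofReal_mul, Real.mul_self_sqrt (by norm_num)]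
    norm_num
  have hBB : B * σ * Bᴴ = Abar * σ * Abarᴴ + Abar * σ * Abarᴴ := by
    rw [hB, Matrix.conjTranspose_smul, Complex.star_def, Complex.conj_ofReal,
      smul_mul_assoc, smul_mul_assoc, mul_smul_comm, smul_smul, hs2, two_smul]
  have hG : A₁ * σ * A₁ᴴ + A₂ * σ * A₂ᴴ
      = B * σ * Bᴴ + (Δ * σ * Δᴴ + Δ * σ * Δᴴ) := by
    rw [hBB, h1, h2]
    simp only [Matrix.conjTranspose_add, Matrix.conjTranspose_sub,
      Matrix.add_mul, Matrix.mul_add, Matrix.sub_mul, Matrix.mul_sub]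
    abel
  have key : T * σ * Tᴴ - (A₁ * σ * A₁ᴴ + A₂ * σ * A₂ᴴ)
      = T * (σ * (T - B)ᴴ)
        + ((T - B) * (σ * Bᴴ) + (-(Δ * (σ * Δᴴ)) + -(Δ * (σ * Δᴴ)))) := by
    rw [hG]
    simp only [Matrix.conjTranspose_sub, Matrix.mul_sub, Matrix.sub_mul, Matrix.mul_assoc]
    abel
  -- operator norm bounds
  have hTnorm : ‖T‖ ≤ 1 := by
    rw [hT]
    refine TNAux.opNorm_diagonal_le _ zero_le_one ?_
    intro i
    fin_cases i
    · show ‖Complex.exp (Complex.I * ((Real.pi : ℂ) / 8))‖ ≤ 1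
      rw [
        show Complex.I * ((Real.pi : ℂ) / 8) = ((Real.pi / 8 : ℝ) : ℂ) * Complex.I by
          push_cast; ring, Complex.norm_exp_ofReal_mul_I]
    · show ‖Complex.exp (-(Complex.I * ((Real.pi : ℂ) / 8)))‖ ≤ 1
      rw [
        show -(Complex.I * ((Real.pi : ℂ) / 8)) = ((-(Real.pi / 8) : ℝ) : ℂ) * Complex.I by
          push_cast; ring, Complex.norm_exp_ofReal_mul_I]
  have habs : ‖u‖ + ‖v‖ ≤ Real.sqrt 2 := by
    have h2' : Real.sqrt 2 * Real.sqrt 2 = 2 := Real.mul_self_sqrt (by norm_num)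
    nlinarith [sq_nonneg (‖u‖ - ‖v‖), Real.sqrt_nonneg 2,
      norm_nonneg u, norm_nonneg v,
      sq_nonneg (‖u‖ + ‖v‖ - Real.sqrt 2)]
  have hBdiag : B = Matrix.diagonal
      ![((Real.sqrt 2 / 2 : ℝ) : ℂ) * (u + v * Complex.exp (Complex.I * (Real.pi / 4))),
        ((Real.sqrt 2 / 2 : ℝ) : ℂ) * (v + u * Complex.exp (-(Complex.I * (Real.pi / 4))))] := by
    rw [hB, hAbar, hA₁, hA₂]
    ext i j
    fin_cases i <;> fin_cases j <;>
      simp [Matrix.diagonal_apply, Matrix.smul_apply, Matrix.add_apply] <;>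
      push_cast <;> ring
  have hBnorm : ‖B‖ ≤ 1 := by
    rw [hBdiag]
    refine TNAux.opNorm_diagonal_le _ zero_le_one ?_
    have hc : ‖(((Real.sqrt 2 / 2 : ℝ) : ℂ))‖ = Real.sqrt 2 / 2 := by
      rw [Complex.norm_real, Real.norm_eq_abs, _root_.abs_of_nonneg]
      positivity
    have h2' : Real.sqrt 2 * Real.sqrt 2 = 2 := Real.mul_self_sqrt (by norm_num)
    have he1 : ‖Complex.exp (Complex.I * ((Real.pi : ℂ) / 4))‖ = 1 := by
      rw [
        show Complex.I * ((Real.pi : ℂ) / 4) = ((Real.pi / 4 : ℝ) : ℂ) * Complex.I by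
          push_cast; ring, Complex.norm_exp_ofReal_mul_I]
    have he2 : ‖Complex.exp (-(Complex.I * ((Real.pi : ℂ) / 4)))‖ = 1 := by
      rw [
        show -(Complex.I * ((Real.pi : ℂ) / 4)) = ((-(Real.pi / 4) : ℝ) : ℂ) * Complex.I by
          push_cast; ring, Complex.norm_exp_ofReal_mul_I]
    intro i
    fin_cases i
    · show ‖((Real.sqrt 2 / 2 : ℝ) : ℂ) * (u + v * Complex.exp (Complex.I * (Real.pi / 4)))‖ ≤ 1
      calc ‖((Real.sqrt 2 / 2 : ℝ) : ℂ) * (u + v * Complex.exp (Complex.I * (Real.pi / 4)))‖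
          = (Real.sqrt 2 / 2) * ‖u + v * Complex.exp (Complex.I * (Real.pi / 4))‖ := by
            rw [norm_mul, hc]
        _ ≤ (Real.sqrt 2 / 2) * (‖u‖ + ‖v‖ * 1) := by
            refine mul_le_mul_of_nonneg_left ?_ (by positivity)
            refine (norm_add_le _ _).trans ?_
            rw [norm_mul, he1]
        _ ≤ (Real.sqrt 2 / 2) * Real.sqrt 2 := by
            refine mul_le_mul_of_nonneg_left ?_ (by positivity)
            simpa using habs
        _ = 1 := by rw [div_mul_eq_mul_div, h2']; norm_num
    · show ‖((Real.sqrt 2 / 2 : ℝ) : ℂ) * (v + u * Complex.exp (-(Complex.I * (Real.pi / 4))))‖ ≤ 1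
      calc ‖((Real.sqrt 2 / 2 : ℝ) : ℂ) * (v + u * Complex.exp (-(Complex.I * (Real.pi / 4))))‖
          = (Real.sqrt 2 / 2) * ‖v + u * Complex.exp (-(Complex.I * (Real.pi / 4)))‖ := by
            rw [norm_mul, hc]
        _ ≤ (Real.sqrt 2 / 2) * (‖v‖ + ‖u‖ * 1) := by
            refine mul_le_mul_of_nonneg_left ?_ (by positivity)
            refine (norm_add_le _ _).trans ?_
            rw [norm_mul, he2]
        _ ≤ (Real.sqrt 2 / 2) * Real.sqrt 2 := by
            refine mul_le_mul_of_nonneg_left ?_ (by positivity)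
            have := habs
            linarith
        _ = 1 := by rw [div_mul_eq_mul_div, h2']; norm_num
  -- trace norm bounds for the three pieces
  have hσ0 : 0 ≤ traceNorm σ := TNAux.traceNorm_nonneg σ
  have bP1 : traceNorm (T * (σ * (T - B)ᴴ)) ≤ ‖T - B‖ := by
    have s1 : traceNorm (σ * (T - B)ᴴ) ≤ ‖(T - B)ᴴ‖ := by
      have := TNAux.traceNorm_mul_le_right σ ((T - B)ᴴ)
      nlinarith [norm_nonneg ((T - B)ᴴ)]
    have s2 := TNAux.traceNorm_mul_le_left T (σ * (T - B)ᴴ)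
    have s3 : ‖(T - B)ᴴ‖ = ‖T - B‖ := Matrix.l2_opNorm_conjTranspose _
    nlinarith [TNAux.traceNorm_nonneg (σ * (T - B)ᴴ), norm_nonneg T,
      norm_nonneg ((T - B)ᴴ)]
  have bP2 : traceNorm ((T - B) * (σ * Bᴴ)) ≤ ‖T - B‖ := by
    have s1 : traceNorm (σ * Bᴴ) ≤ 1 := by
      have := TNAux.traceNorm_mul_le_right σ (Bᴴ)
      have hBc : ‖Bᴴ‖ = ‖B‖ := Matrix.l2_opNorm_conjTranspose _
      nlinarith [norm_nonneg (Bᴴ), norm_nonneg B]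
    have s2 := TNAux.traceNorm_mul_le_left (T - B) (σ * Bᴴ)
    nlinarith [TNAux.traceNorm_nonneg (σ * Bᴴ), norm_nonneg (T - B)]
  have bQ : traceNorm (Δ * (σ * Δᴴ)) ≤ ‖Δ‖ ^ 2 := by
    have s1 : traceNorm (σ * Δᴴ) ≤ ‖Δ‖ := by
      have := TNAux.traceNorm_mul_le_right σ (Δᴴ)
      have hDc : ‖Δᴴ‖ = ‖Δ‖ := Matrix.l2_opNorm_conjTranspose _
      nlinarith [norm_nonneg (Δᴴ), norm_nonneg Δ]
    have s2 := TNAux.traceNorm_mul_le_left Δ (σ * Δᴴ)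
    have : traceNorm (Δ * (σ * Δᴴ)) ≤ ‖Δ‖ * ‖Δ‖ := by
      nlinarith [TNAux.traceNorm_nonneg (σ * Δᴴ), norm_nonneg Δ]
    nlinarith [norm_nonneg Δ]
  rw [key]
  have tri1 := TNAux.traceNorm_add_le (T * (σ * (T - B)ᴴ))
    ((T - B) * (σ * Bᴴ) + (-(Δ * (σ * Δᴴ)) + -(Δ * (σ * Δᴴ))))
  have tri2 := TNAux.traceNorm_add_le ((T - B) * (σ * Bᴴ))
    (-(Δ * (σ * Δᴴ)) + -(Δ * (σ * Δᴴ)))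
  have tri3 := TNAux.traceNorm_add_le (-(Δ * (σ * Δᴴ))) (-(Δ * (σ * Δᴴ)))
  have hneg := TNAux.traceNorm_neg (Δ * (σ * Δᴴ))
  rw [hneg] at tri3
  nlinarith [bP1, bP2, bQ]
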